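/- Let p = (p₁,p₂) be an integer pair with 0 ≤ p₁ ≤ p₂, let Ω ⊆ ℝ² be open, let f be twice continuously differentiable on Ω, and let x ∈ Ω. Then lim_{l→0⁺} (1/l²) · Σ_{D(x',l) ∼_p D(x,l)} ( I(f,x',l) − I(f,x,l) ) = 2 (p₁² + p₂²) c_p Δf(x), where Δf = ∂²f/∂ξ₁² + ∂²f/∂ξ₂². -/

import Mathlib

open MeasureTheory Real Filter Topology

noncomputable section

/-- The `l`-square centered at `x`. -/
def Dsq (x : ℝ × ℝ) (l : ℝ) : Set (ℝ × ℝ) :=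
  Set.Icc (x.1 - l / 2) (x.1 + l / 2) ×ˢ Set.Icc (x.2 - l / 2) (x.2 + l / 2)

/-- `I(f,x,l)`: the average of `f` over the `l`-square centered at `x`. -/
def Iavg (f : ℝ × ℝ → ℝ) (x : ℝ × ℝ) (l : ℝ) : ℝ :=
  (1 / l ^ 2) * ∫ ξ in Dsq x l, f ξ

/-- `D(x',l)` is a `p`-neighbor of `D(x,l)`. -/
def isNbr (p : ℤ × ℤ) (l : ℝ) (x x' : ℝ × ℝ) : Prop :=
  (|x'.1 - x.1| = (p.1 : ℝ) * l ∧ |x'.2 - x.2| = (p.2 : ℝ) * l) ∨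
    (|x'.1 - x.1| = (p.2 : ℝ) * l ∧ |x'.2 - x.2| = (p.1 : ℝ) * l)

/-- `I_p(f,x,l)`: sum of averages over all `p`-neighbors of `D(x,l)`. -/
def Ipavg (f : ℝ × ℝ → ℝ) (p : ℤ × ℤ) (x : ℝ × ℝ) (l : ℝ) : ℝ :=
  ∑ᶠ x' ∈ {x' : ℝ × ℝ | isNbr p l x x'}, Iavg f x' l

/-- The constant `c_p` (for integer pairs with `0 ≤ p₁ ≤ p₂`). -/
def cP (p : ℤ × ℤ) : ℝ :=
  if p.1 = 0 ∧ p.2 = 0 then 1 / 8 else if p.1 = 0 ∨ p.1 = p.2 then 1 / 2 else 1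

/-- The constant `T_p^(k)`. -/
def Tc (p : ℤ × ℤ) (k : ℕ) : ℝ :=
  2 * cP p *
    (((2 * (p.1 : ℂ) + 1) + (2 * (p.2 : ℂ) + 1) * Complex.I) ^ (4 * k + 2)
      - ((2 * (p.1 : ℂ) - 1) + (2 * (p.2 : ℂ) + 1) * Complex.I) ^ (4 * k + 2)
      + ((2 * (p.1 : ℂ) - 1) + (2 * (p.2 : ℂ) - 1) * Complex.I) ^ (4 * k + 2)
      - ((2 * (p.1 : ℂ) + 1) + (2 * (p.2 : ℂ) - 1) * Complex.I) ^ (4 * k + 2)).im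

/-- The polynomial harmonic function `f_n^x`. -/
def fP (x : ℝ × ℝ) (n : ℕ) (ξ : ℝ × ℝ) : ℝ :=
  ∑ j ∈ Finset.range (n / 2 + 1),
    (-1 : ℝ) ^ j * (ξ.1 - x.1) ^ (n - 2 * j) * (ξ.2 - x.2) ^ (2 * j) /
      (((n - 2 * j).factorial : ℝ) * ((2 * j).factorial : ℝ))

/-- The polynomial harmonic function `g_n^x`. -/
def gP (x : ℝ × ℝ) (n : ℕ) (ξ : ℝ × ℝ) : ℝ :=
  ∑ j ∈ Finset.range ((n - 1) / 2 + 1),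
    (-1 : ℝ) ^ j * (ξ.1 - x.1) ^ (n - 2 * j - 1) * (ξ.2 - x.2) ^ (2 * j + 1) /
      (((n - 2 * j - 1).factorial : ℝ) * ((2 * j + 1).factorial : ℝ))

/-- Partial derivative in the first coordinate. -/
def pd1 (f : ℝ × ℝ → ℝ) (y : ℝ × ℝ) : ℝ := fderiv ℝ f y (1, 0)

/-- Partial derivative in the second coordinate. -/
def pd2 (f : ℝ × ℝ → ℝ) (y : ℝ × ℝ) : ℝ := fderiv ℝ f y (0, 1)

/-- `h` is harmonic on the open set `Ω`. -/
def HarmonicOn (h : ℝ × ℝ → ℝ) (Ω : Set (ℝ × ℝ)) : Prop :=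
  ContDiffOn ℝ 2 h Ω ∧ ∀ y ∈ Ω, pd1 (pd1 h) y + pd2 (pd2 h) y = 0

/-- `‖𝒫‖ = max_{p ∈ 𝒫} ‖2p+(1,1)‖`. -/
def PNorm (P : Finset (ℤ × ℤ)) : ℝ :=
  sSup ((fun p : ℤ × ℤ =>
    Real.sqrt ((2 * (p.1 : ℝ) + 1) ^ 2 + (2 * (p.2 : ℝ) + 1) ^ 2)) '' ↑P)

/-- The four corners of the unit square. -/
def qv : Fin 4 → ℝ × ℝ := ![(0, 0), (1, 0), (1, 1), (0, 1)]

/-- The contraction `F_i(x) = (x + q_i)/2`. -/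
def Fc (i : Fin 4) (x : ℝ × ℝ) : ℝ × ℝ := ((x.1 + (qv i).1) / 2, (x.2 + (qv i).2) / 2)

/-- `F_w = F_{w₁} ∘ ⋯ ∘ F_{w_m}` for a word `w` of length `m`. -/
def Fword {m : ℕ} (w : Fin m → Fin 4) : ℝ × ℝ → ℝ × ℝ :=
  (List.ofFn w).foldr (fun i acc => Fc i ∘ acc) id

/-- The center of the `m`-cell `F_w S`. -/
def cellCtr {m : ℕ} (w : Fin m → Fin 4) : ℝ × ℝ := Fword w (1 / 2, 1 / 2)

/-- `B_w(f)`: the average of `f` over the `m`-cell `F_w S` (a dyadic square of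
side length `2⁻ᵐ` centered at `cellCtr w`). -/
def Bav (f : ℝ × ℝ → ℝ) {m : ℕ} (w : Fin m → Fin 4) : ℝ :=
  Iavg f (cellCtr w) ((1 / 2) ^ m)

section Stmt15Aux

open Metric

/-- Second-order Taylor estimate, uniform on a neighborhood of `x`. -/
lemma taylor_est {Ω : Set (ℝ×ℝ)} (hΩ : IsOpen Ω) {f : ℝ×ℝ → ℝ} (hf : ContDiffOn ℝ 2 f Ω)
    {x : ℝ×ℝ} (hx : x ∈ Ω) {ε : ℝ} (hε : 0 < ε) :
    ∃ δ > 0, closedBall x (3*δ) ⊆ Ω ∧ ∀ ξ h : ℝ×ℝ, ‖ξ - x‖ ≤ δ → ‖h‖ ≤ δ →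
      |f (ξ + h) - f ξ - fderiv ℝ f ξ h
        - (1/2) * (fderiv ℝ (fderiv ℝ f) x h h)| ≤ ε * ‖h‖^2 := by
  have hf' : ContDiffOn ℝ 1 (fderiv ℝ f) Ω := hf.fderiv_of_isOpen (m := 1) hΩ (by norm_num)
  have hHc : ContinuousOn (fun y => fderiv ℝ (fderiv ℝ f) y) Ω :=
    (hf'.fderiv_of_isOpen (m := 0) hΩ (by norm_num)).continuousOn
  have hHx : ContinuousAt (fun y => fderiv ℝ (fderiv ℝ f) y) x :=
    hHc.continuousAt (hΩ.mem_nhds hx)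
  replace hHx : ∀ ε > 0, ∃ δ > 0, ∀ {y : ℝ × ℝ}, dist y x < δ →
      dist (fderiv ℝ (fderiv ℝ f) y) (fderiv ℝ (fderiv ℝ f) x) < ε :=
    Metric.continuousAt_iff.1 hHx
  obtain ⟨δ₁, hδ₁, hH⟩ := hHx ε hε
  obtain ⟨r₀, hr₀, hball⟩ := Metric.mem_nhds_iff.1 (hΩ.mem_nhds hx)
  set δ := min δ₁ (r₀/2) / 4 with hδdef
  have hδpos : 0 < δ := by positivity
  have hsub : closedBall x (3*δ) ⊆ Ω := by
    refine subset_trans ?_ hball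
    refine closedBall_subset_ball ?_
    have h1 : min δ₁ (r₀/2) ≤ r₀/2 := min_le_right _ _
    have : 3*δ ≤ 3/4 * (r₀/2) := by rw [hδdef]; linarith
    linarith
  refine ⟨δ, hδpos, hsub, ?_⟩
  intro ξ h hξ hh
  have hmem : ∀ t : ℝ, |t| ≤ 1 → (ξ + t • h) ∈ Ω ∧ dist (ξ + t • h) x < δ₁ := by
    intro t ht
    have hd : dist (ξ + t • h) x ≤ 2 * δ := by
      have : ξ + t • h - x = (ξ - x) + t • h := by abel
      rw [dist_eq_norm, this]
      calc ‖(ξ - x) + t • h‖ ≤ ‖ξ - x‖ + ‖t • h‖ := norm_add_le _ _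
        _ ≤ δ + |t| * ‖h‖ := by rw [norm_smul, Real.norm_eq_abs]; gcongr
        _ ≤ δ + 1 * δ := by gcongr
        _ = 2 * δ := by ring
    constructor
    · apply hsub; rw [mem_closedBall]; linarith
    · have : 2*δ < δ₁ := by
        have h1 : min δ₁ (r₀/2) ≤ δ₁ := min_le_left _ _
        rw [hδdef]; by_cases hc : δ₁ ≤ r₀/2
        · simp [min_eq_left hc]; linarith
        · push_neg at hc; rw [min_eq_right hc.le]; linarith
      linarith
  set f' := fun y => fderiv ℝ f y with hf'def
  set H := fun y => fderiv ℝ (fderiv ℝ f) y with hHdef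
  have hfd : ∀ y ∈ Ω, HasFDerivAt f (f' y) y := fun y hy =>
    ((hf.differentiableOn (by norm_num)).differentiableAt (hΩ.mem_nhds hy)).hasFDerivAt
  have hfd2 : ∀ y ∈ Ω, HasFDerivAt f' (H y) y := fun y hy =>
    ((hf'.differentiableOn (by norm_num)).differentiableAt (hΩ.mem_nhds hy)).hasFDerivAt
  have hpath : ∀ t : ℝ, HasDerivAt (fun t : ℝ => ξ + t • h) h t := by
    intro t
    simpa using ((hasDerivAt_id t).smul_const h).const_add ξ
  have key1 : ∀ t ∈ Set.Icc (0:ℝ) 1,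
      ‖f' (ξ + t • h) h - f' ξ h - t * (H x h h)‖ ≤ ε * ‖h‖^2 := by
    intro t ht
    set u := fun s : ℝ => f' (ξ + s • h) h - s * (H x h h) with hu
    have hu' : ∀ s ∈ Set.Icc (0:ℝ) 1,
        HasDerivWithinAt u (H (ξ + s • h) h h - H x h h) (Set.Icc 0 1) s := by
      intro s hs
      have habs : |s| ≤ 1 := by rw [abs_le]; exact ⟨by linarith [hs.1], hs.2⟩
      have h1 : HasDerivAt (fun s : ℝ => f' (ξ + s • h)) (H (ξ + s • h) h) s :=
        (hfd2 _ (hmem s habs).1).comp_hasDerivAt s (hpath s)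
      have h2 : HasDerivAt (fun s : ℝ => f' (ξ + s • h) h) (H (ξ + s • h) h h) s := by
        simpa using h1.clm_apply (hasDerivAt_const s h)
      have h3 : HasDerivAt (fun s : ℝ => s * (H x h h)) (H x h h) s := hasDerivAt_mul_const _
      exact (h2.sub h3).hasDerivWithinAt
    have hbound : ∀ s ∈ Set.Icc (0:ℝ) 1, ‖H (ξ + s • h) h h - H x h h‖ ≤ ε * ‖h‖^2 := by
      intro s hs
      have habs : |s| ≤ 1 := by rw [abs_le]; exact ⟨by linarith [hs.1], hs.2⟩
      have : H (ξ + s • h) h h - H x h h = ((H (ξ + s • h) - H x) h) h := by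
        simp [ContinuousLinearMap.sub_apply]
      rw [this]
      calc ‖((H (ξ + s • h) - H x) h) h‖ ≤ ‖(H (ξ + s • h) - H x) h‖ * ‖h‖ :=
            ContinuousLinearMap.le_opNorm _ _
        _ ≤ ‖H (ξ + s • h) - H x‖ * ‖h‖ * ‖h‖ := by
            gcongr; exact ContinuousLinearMap.le_opNorm _ _
        _ ≤ ε * ‖h‖ * ‖h‖ := by
            gcongr
            have := hH (hmem s habs).2
            exact le_of_lt (lt_of_eq_of_lt (dist_eq_norm (H (ξ + s • h)) (H x)).symm this)
        _ = ε * ‖h‖^2 := by ring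
    have := Convex.norm_image_sub_le_of_norm_hasDerivWithin_le hu' hbound
      (convex_Icc 0 1) (Set.left_mem_Icc.2 zero_le_one) ht
    have hu0 : u 0 = f' ξ h := by simp [hu]
    have hut : u t = f' (ξ + t • h) h - t * (H x h h) := rfl
    rw [hu0, hut] at this
    calc ‖f' (ξ + t • h) h - f' ξ h - t * (H x h h)‖
        = ‖(f' (ξ + t • h) h - t * (H x h h)) - f' ξ h‖ := by ring_nf
      _ ≤ ε * ‖h‖^2 * ‖t - 0‖ := this
      _ ≤ ε * ‖h‖^2 * 1 := by
          gcongr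
          rw [sub_zero, Real.norm_eq_abs, abs_le]; exact ⟨by linarith [ht.1], ht.2⟩
      _ = ε * ‖h‖^2 := by ring
  set g := fun t : ℝ => f (ξ + t • h) - f ξ - t * (f' ξ h) - t^2/2 * (H x h h) with hg
  have hg' : ∀ t ∈ Set.Icc (0:ℝ) 1,
      HasDerivWithinAt g (f' (ξ + t • h) h - f' ξ h - t * (H x h h)) (Set.Icc 0 1) t := by
    intro t ht
    have habs : |t| ≤ 1 := by rw [abs_le]; exact ⟨by linarith [ht.1], ht.2⟩
    have h1 : HasDerivAt (fun t : ℝ => f (ξ + t • h)) (f' (ξ + t • h) h) t := by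
      exact (hfd _ (hmem t habs).1).comp_hasDerivAt t (hpath t)
    have h2 : HasDerivAt (fun t : ℝ => t * (f' ξ h)) (f' ξ h) t := hasDerivAt_mul_const _
    have h3 : HasDerivAt (fun t : ℝ => t^2/2 * (H x h h)) (t * (H x h h)) t := by
      have := ((hasDerivAt_pow 2 t).div_const 2).mul_const (H x h h)
      exact this.congr_deriv (by rw [show (2:ℕ) - 1 = 1 from rfl, pow_one]; push_cast; ring)
    exact (((h1.sub_const (f ξ)).sub h2).sub h3).hasDerivWithinAt
  have hfinal := Convex.norm_image_sub_le_of_norm_hasDerivWithin_le hg' key1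
    (convex_Icc 0 1) (Set.left_mem_Icc.2 zero_le_one) (Set.right_mem_Icc.2 zero_le_one)
  have hg0 : g 0 = 0 := by simp [hg]
  have hg1 : g 1 = f (ξ + h) - f ξ - f' ξ h - (1/2) * (H x h h) := by
    simp [hg]; try ring
  rw [hg0, hg1, sub_zero] at hfinal
  rw [← Real.norm_eq_abs]
  calc ‖f (ξ + h) - f ξ - f' ξ h - 1/2 * (H x h h)‖ ≤ ε * ‖h‖^2 * ‖(1:ℝ) - 0‖ := hfinal
    _ = ε * ‖h‖^2 := by norm_num

/-- The set of displacement vectors of `p`-neighbors. -/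
def nbrSet (p : ℤ × ℤ) : Finset (ℝ × ℝ) :=
  {((p.1:ℝ), (p.2:ℝ)), ((p.1:ℝ), -(p.2:ℝ)), (-(p.1:ℝ), (p.2:ℝ)), (-(p.1:ℝ), -(p.2:ℝ)),
   ((p.2:ℝ), (p.1:ℝ)), ((p.2:ℝ), -(p.1:ℝ)), (-(p.2:ℝ), (p.1:ℝ)), (-(p.2:ℝ), -(p.1:ℝ))}

lemma mem_nbrSet {p : ℤ × ℤ} {v : ℝ × ℝ} :
    v ∈ nbrSet p ↔ v = ((p.1:ℝ), (p.2:ℝ)) ∨ v = ((p.1:ℝ), -(p.2:ℝ)) ∨ v = (-(p.1:ℝ), (p.2:ℝ))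
      ∨ v = (-(p.1:ℝ), -(p.2:ℝ)) ∨ v = ((p.2:ℝ), (p.1:ℝ)) ∨ v = ((p.2:ℝ), -(p.1:ℝ))
      ∨ v = (-(p.2:ℝ), (p.1:ℝ)) ∨ v = (-(p.2:ℝ), -(p.1:ℝ)) := by
  simp [nbrSet]

lemma neg_mem_nbrSet {p : ℤ × ℤ} {v : ℝ × ℝ} (hv : v ∈ nbrSet p) : -v ∈ nbrSet p := by
  rcases mem_nbrSet.1 hv with rfl|rfl|rfl|rfl|rfl|rfl|rfl|rfl <;>
    simp [mem_nbrSet, Prod.ext_iff, neg_neg] <;> tauto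

lemma sum_nbrSet_zero (p : ℤ × ℤ) : ∑ v ∈ nbrSet p, v = 0 := by
  classical
  have himg : (nbrSet p).image Neg.neg = nbrSet p := by
    ext w
    simp only [Finset.mem_image]
    constructor
    · rintro ⟨v, hv, rfl⟩; exact neg_mem_nbrSet hv
    · intro hw; exact ⟨-w, neg_mem_nbrSet hw, neg_neg w⟩
  have h1 : ∑ v ∈ nbrSet p, v = ∑ v ∈ nbrSet p, (-v) := by
    conv_lhs => rw [← himg]
    rw [Finset.sum_image (fun a _ b _ h => neg_injective h)]
  have h2 : (∑ v ∈ nbrSet p, v) + (∑ v ∈ nbrSet p, v) = 0 := by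
    nth_rewrite 1 [h1]
    rw [← Finset.sum_add_distrib]
    exact Finset.sum_eq_zero (fun v _ => neg_add_cancel v)
  have h3 : (2:ℝ) • (∑ v ∈ nbrSet p, v) = 0 := by rw [two_smul]; exact h2
  rcases smul_eq_zero.mp h3 with h|h
  · norm_num at h
  · exact h

lemma nbr_set_eq (p : ℤ × ℤ) (hp1 : 0 ≤ p.1) (hp2 : p.1 ≤ p.2) (x : ℝ × ℝ) {l : ℝ}
    (hl : 0 < l) :
    {x' : ℝ × ℝ | isNbr p l x x'} = ↑((nbrSet p).image (fun v => x + l • v)) := by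
  classical
  have haR : (0:ℝ) ≤ (p.1:ℝ) := by exact_mod_cast hp1
  have hbR : (0:ℝ) ≤ (p.2:ℝ) := by exact_mod_cast hp1.trans hp2
  have ha : (0:ℝ) ≤ (p.1:ℝ) * l := mul_nonneg haR hl.le
  have hb : (0:ℝ) ≤ (p.2:ℝ) * l := mul_nonneg hbR hl.le
  ext x'
  simp only [Set.mem_setOf_eq, isNbr, Finset.coe_image, Set.mem_image, Finset.mem_coe,
    mem_nbrSet]
  constructor
  · rw [abs_eq ha, abs_eq hb, abs_eq hb, abs_eq ha]
    rintro (⟨h1|h1, h2|h2⟩|⟨h1|h1, h2|h2⟩)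
    · exact ⟨_, Or.inl rfl, by refine Prod.ext ?_ ?_ <;> simp [smul_eq_mul] <;> linarith⟩
    · exact ⟨_, Or.inr (Or.inl rfl), by refine Prod.ext ?_ ?_ <;> simp [smul_eq_mul] <;> linarith⟩
    · exact ⟨_, Or.inr (Or.inr (Or.inl rfl)), by refine Prod.ext ?_ ?_ <;> simp [smul_eq_mul] <;> linarith⟩
    · exact ⟨_, Or.inr (Or.inr (Or.inr (Or.inl rfl))), by refine Prod.ext ?_ ?_ <;> simp [smul_eq_mul] <;> linarith⟩
    · exact ⟨_, Or.inr (Or.inr (Or.inr (Or.inr (Or.inl rfl)))), by refine Prod.ext ?_ ?_ <;> simp [smul_eq_mul] <;> linarith⟩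
    · exact ⟨_, Or.inr (Or.inr (Or.inr (Or.inr (Or.inr (Or.inl rfl))))), by refine Prod.ext ?_ ?_ <;> simp [smul_eq_mul] <;> linarith⟩
    · exact ⟨_, Or.inr (Or.inr (Or.inr (Or.inr (Or.inr (Or.inr (Or.inl rfl)))))), by refine Prod.ext ?_ ?_ <;> simp [smul_eq_mul] <;> linarith⟩
    · exact ⟨_, Or.inr (Or.inr (Or.inr (Or.inr (Or.inr (Or.inr (Or.inr rfl)))))), by refine Prod.ext ?_ ?_ <;> simp [smul_eq_mul] <;> linarith⟩
  · rintro ⟨v, hv, rfl⟩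
    rcases hv with rfl|rfl|rfl|rfl|rfl|rfl|rfl|rfl <;>
      [left; left; left; left; right; right; right; right] <;>
      constructor <;>
      simp [add_sub_cancel_left, abs_mul, abs_neg, abs_of_nonneg hl.le,
        abs_of_nonneg haR, abs_of_nonneg hbR, mul_comm]

lemma integral_Dsq_translate (f : ℝ × ℝ → ℝ) (x w : ℝ × ℝ) (l : ℝ) :
    ∫ ξ in Dsq x l, f (ξ + w) = ∫ ξ in Dsq (x + w) l, f ξ := by
  have hpre : (fun ξ : ℝ × ℝ => ξ + w) ⁻¹' Dsq (x + w) l = Dsq x l := by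
    ext ξ
    simp only [Dsq, Set.mem_preimage, Set.mem_prod, Set.mem_Icc, Prod.fst_add, Prod.snd_add]
    constructor <;> intro h <;> exact ⟨⟨by linarith [h.1.1], by linarith [h.1.2]⟩,
      ⟨by linarith [h.2.1], by linarith [h.2.2]⟩⟩
  rw [← hpre]
  exact (measurePreserving_add_right volume w).setIntegral_preimage_emb
    (MeasurableEquiv.addRight w).measurableEmbedding f _

lemma volume_Dsq (x : ℝ × ℝ) {l : ℝ} (hl : 0 < l) :
    volume (Dsq x l) = ENNReal.ofReal (l ^ 2) := by
  rw [Dsq, show (volume : Measure (ℝ×ℝ)) = (volume : Measure ℝ).prod volume from rfl,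
    Measure.prod_prod, Real.volume_Icc, Real.volume_Icc]
  rw [show x.1 + l/2 - (x.1 - l/2) = l by ring, show x.2 + l/2 - (x.2 - l/2) = l by ring,
    ← ENNReal.ofReal_mul hl.le]
  ring_nf

lemma isCompact_Dsq (x : ℝ × ℝ) (l : ℝ) : IsCompact (Dsq x l) :=
  (isCompact_Icc).prod isCompact_Icc

lemma mem_Dsq_norm {x ξ : ℝ × ℝ} {l : ℝ} (h : ξ ∈ Dsq x l) : ‖ξ - x‖ ≤ l / 2 := by
  obtain ⟨⟨h1, h2⟩, ⟨h3, h4⟩⟩ := h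
  rw [Prod.norm_def]
  apply max_le <;> rw [Real.norm_eq_abs] <;>
    [exact abs_le.2 ⟨by simpa using by linarith, by simpa using by linarith⟩;
     exact abs_le.2 ⟨by simpa using by linarith, by simpa using by linarith⟩]

lemma core_limit {Ω : Set (ℝ×ℝ)} (hΩ : IsOpen Ω) {f : ℝ×ℝ → ℝ} (hf : ContDiffOn ℝ 2 f Ω)
    {x : ℝ×ℝ} (hx : x ∈ Ω) (V : Finset (ℝ×ℝ)) (hV0 : ∑ v ∈ V, v = 0) :
    Tendsto (fun l : ℝ => (1/l^2) * ∑ v ∈ V, (Iavg f (x + l • v) l - Iavg f x l)) (𝓝[>] 0)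
      (𝓝 ((1/2) * ∑ v ∈ V, (fderiv ℝ (fderiv ℝ f) x v v))) := by
  set T : ℝ := (1/2) * ∑ v ∈ V, (fderiv ℝ (fderiv ℝ f) x v v) with hT
  rw [Metric.tendsto_nhdsWithin_nhds]
  intro ε hε
  set K : ℝ := 1 + ∑ v ∈ V, ‖v‖^2 with hK
  have hKpos : 0 < K := by
    have : 0 ≤ ∑ v ∈ V, ‖v‖^2 := Finset.sum_nonneg (fun v _ => by positivity)
    rw [hK]; linarith
  set M : ℝ := 1 + ∑ v ∈ V, ‖v‖ with hM
  have hMpos : (1:ℝ) ≤ M := by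
    have : 0 ≤ ∑ v ∈ V, ‖v‖ := Finset.sum_nonneg (fun v _ => by positivity)
    rw [hM]; linarith
  have hMb : ∀ v ∈ V, ‖v‖ ≤ M := by
    intro v hv
    have : ‖v‖ ≤ ∑ v ∈ V, ‖v‖ := Finset.single_le_sum (fun v _ => norm_nonneg v) hv
    rw [hM]; linarith
  have hε₀ : 0 < ε / (2 * K) := by positivity
  obtain ⟨δ, hδ, hsub, hest⟩ := taylor_est hΩ hf hx hε₀
  refine ⟨δ / M, by positivity, ?_⟩
  intro l hl hld
  rw [Set.mem_Ioi] at hl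
  rw [Real.dist_eq, sub_zero, abs_of_pos hl] at hld
  have hlM : l * M < δ := (lt_div_iff₀ (by linarith)).1 hld
  have hlδ : l ≤ δ := by nlinarith
  -- containments
  have hDsub : Dsq x l ⊆ closedBall x (3*δ) := fun ξ hξ => by
    rw [mem_closedBall, dist_eq_norm]
    have := mem_Dsq_norm hξ; linarith
  have hsmul_norm : ∀ v ∈ V, ‖l • v‖ ≤ δ := by
    intro v hv
    rw [norm_smul, Real.norm_eq_abs, abs_of_pos hl]
    calc l * ‖v‖ ≤ l * M := by
          have h0 := hMb v hv
          have : 0 < l := hl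
          nlinarith
      _ ≤ δ := hlM.le
  have hshift : ∀ v ∈ V, ∀ ξ ∈ Dsq x l, ξ + l • v ∈ closedBall x (3*δ) := by
    intro v hv ξ hξ
    rw [mem_closedBall, dist_eq_norm]
    have h1 := mem_Dsq_norm hξ
    have h2 := hsmul_norm v hv
    have h3 : ξ + l • v - x = (ξ - x) + l • v := by abel
    rw [h3]
    calc ‖(ξ - x) + l • v‖ ≤ ‖ξ - x‖ + ‖l • v‖ := norm_add_le _ _
      _ ≤ 3 * δ := by linarith
  -- integrability
  have hfc : ContinuousOn f Ω := hf.continuousOn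
  have hcomp := isCompact_Dsq x l
  have hint0 : IntegrableOn f (Dsq x l) volume :=
    ContinuousOn.integrableOn_compact hcomp (hfc.mono (hDsub.trans hsub))
  have hintv : ∀ v ∈ V, IntegrableOn (fun ξ => f (ξ + l • v)) (Dsq x l) volume := by
    intro v hv
    apply ContinuousOn.integrableOn_compact hcomp
    exact hfc.comp (continuous_add_right (l • v)).continuousOn
      (fun ξ hξ => hsub (hshift v hv ξ hξ))
  have hGint : IntegrableOn (fun ξ => ∑ v ∈ V, (f (ξ + l • v) - f ξ)) (Dsq x l) volume :=
    integrable_finset_sum _ (fun v hv => ((hintv v hv).sub hint0))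
  -- rewrite E l as a single integral
  have hA : ∀ v ∈ V, Iavg f (x + l • v) l - Iavg f x l
      = (1/l^2) * ∫ ξ in Dsq x l, (f (ξ + l • v) - f ξ) := by
    intro v hv
    rw [Iavg, Iavg, ← integral_Dsq_translate f x (l • v) l, ← mul_sub,
      ← integral_sub (hintv v hv) hint0]
  have hE : (1/l^2) * ∑ v ∈ V, (Iavg f (x + l • v) l - Iavg f x l)
      = (1/l^2) * ((1/l^2) * ∫ ξ in Dsq x l, (∑ v ∈ V, (f (ξ + l • v) - f ξ))) := by
    rw [Finset.sum_congr rfl hA, ← Finset.mul_sum]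
    congr 1
    congr 1
    exact (integral_finset_sum V (f := fun v ξ => f (ξ + l • v) - f ξ)
      (fun v hv => ((hintv v hv).sub hint0))).symm
  -- pointwise bound
  have hkey : ∀ ξ ∈ Dsq x l,
      |(∑ v ∈ V, (f (ξ + l • v) - f ξ)) - l^2 * T| ≤ ε/(2*K) * l^2 * K := by
    intro ξ hξ
    have hξx : ‖ξ - x‖ ≤ δ := le_trans (mem_Dsq_norm hξ) (by linarith)
    have hsumlin : ∑ v ∈ V, (fderiv ℝ f ξ) (l • v) = 0 := by
      rw [← map_sum, ← Finset.smul_sum, hV0, smul_zero, map_zero]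
    have hHsq : ∀ v : ℝ×ℝ, (fderiv ℝ (fderiv ℝ f) x (l • v)) (l • v)
        = l^2 * (fderiv ℝ (fderiv ℝ f) x v v) := by
      intro v
      rw [(fderiv ℝ (fderiv ℝ f) x).map_smul, ContinuousLinearMap.smul_apply,
        (fderiv ℝ (fderiv ℝ f) x v).map_smul]
      simp [smul_eq_mul]; ring
    have hdecomp : (∑ v ∈ V, (f (ξ + l • v) - f ξ)) - l^2 * T
        = ∑ v ∈ V, (f (ξ + l • v) - f ξ - (fderiv ℝ f ξ) (l • v)
            - (1/2) * (fderiv ℝ (fderiv ℝ f) x (l • v) (l • v))) := by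
      have e4 : l^2 * T = ∑ v ∈ V, (1/2) * (l^2 * (fderiv ℝ (fderiv ℝ f) x v v)) := by
        rw [hT, Finset.mul_sum, Finset.mul_sum]
        exact Finset.sum_congr rfl (fun v _ => by ring)
      simp only [Finset.sum_sub_distrib]
      rw [hsumlin, sub_zero, e4]
      congr 1
      exact Finset.sum_congr rfl (fun v _ => by rw [hHsq v])
    rw [hdecomp]
    calc |∑ v ∈ V, (f (ξ + l • v) - f ξ - (fderiv ℝ f ξ) (l • v)
            - (1/2) * (fderiv ℝ (fderiv ℝ f) x (l • v) (l • v)))|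
        ≤ ∑ v ∈ V, |f (ξ + l • v) - f ξ - (fderiv ℝ f ξ) (l • v)
            - (1/2) * (fderiv ℝ (fderiv ℝ f) x (l • v) (l • v))| :=
          Finset.abs_sum_le_sum_abs _ _
      _ ≤ ∑ v ∈ V, ε/(2*K) * (l^2 * ‖v‖^2) := by
          apply Finset.sum_le_sum
          intro v hv
          have := hest ξ (l • v) hξx (hsmul_norm v hv)
          have hnrm : ‖l • v‖^2 = l^2 * ‖v‖^2 := by
            rw [norm_smul, Real.norm_eq_abs, abs_of_pos hl, mul_pow]
          rw [hnrm] at this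
          linarith
      _ = ε/(2*K) * l^2 * (∑ v ∈ V, ‖v‖^2) := by
          rw [Finset.mul_sum]
          exact Finset.sum_congr rfl (fun v _ => by ring)
      _ ≤ ε/(2*K) * l^2 * K := by
          have h1 : (∑ v ∈ V, ‖v‖^2) ≤ K := by rw [hK]; linarith
          have h2 : 0 ≤ ε/(2*K) * l^2 := by positivity
          nlinarith
  -- final estimate
  have hvol : volume (Dsq x l) < ⊤ := by
    rw [volume_Dsq x hl]; exact ENNReal.ofReal_lt_top
  have hconst : ∫ _ξ in Dsq x l, (l^2*T) = l^2*(l^2*T) := by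
    rw [setIntegral_const, measureReal_def, volume_Dsq x hl, ENNReal.toReal_ofReal (by positivity),
      smul_eq_mul]
  have hsplit : (1/l^2) * ((1/l^2) * ∫ ξ in Dsq x l, (∑ v ∈ V, (f (ξ + l • v) - f ξ))) - T
      = (1/l^2)*(1/l^2) * ∫ ξ in Dsq x l,
          ((∑ v ∈ V, (f (ξ + l • v) - f ξ)) - l^2*T) := by
    rw [integral_sub hGint (integrableOn_const hvol.ne), hconst]
    have hl2 : l^2 ≠ 0 := by positivity
    field_simp
  rw [Real.dist_eq, hE, hsplit]
  have hbound := norm_setIntegral_le_of_norm_le_const (μ := volume)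
    (f := fun ξ => (∑ v ∈ V, (f (ξ + l • v) - f ξ)) - l^2*T) hvol
    (fun ξ hξ => by rw [Real.norm_eq_abs]; exact hkey ξ hξ)
  rw [measureReal_def, volume_Dsq x hl, ENNReal.toReal_ofReal (by positivity)] at hbound
  rw [abs_mul]
  have hc : |(1/l^2)*(1/l^2)| = (1/l^2)*(1/l^2) := abs_of_pos (by positivity)
  rw [hc]
  rw [Real.norm_eq_abs] at hbound
  calc (1/l^2)*(1/l^2) * |∫ ξ in Dsq x l, ((∑ v ∈ V, (f (ξ + l • v) - f ξ)) - l^2*T)|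
      ≤ (1/l^2)*(1/l^2) * (ε/(2*K) * l^2 * K * l^2) := by
        have h2 : 0 ≤ (1/l^2)*(1/l^2) := by positivity
        exact mul_le_mul_of_nonneg_left hbound h2
    _ = ε/2 := by field_simp
    _ < ε := by linarith

lemma quad_expand (H : (ℝ×ℝ) →L[ℝ] (ℝ×ℝ) →L[ℝ] ℝ) (c d : ℝ) :
    H ((c,d):ℝ×ℝ) ((c,d):ℝ×ℝ) = c^2 * H (1,0) (1,0) + c*d*(H (1,0) (0,1) + H (0,1) (1,0))
      + d^2 * H (0,1) (0,1) := by
  have h : ((c,d):ℝ×ℝ) = c • ((1,0):ℝ×ℝ) + d • ((0,1):ℝ×ℝ) := by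
    simp [Prod.ext_iff]
  rw [h]
  simp only [map_add, _root_.map_smul, ContinuousLinearMap.add_apply,
    ContinuousLinearMap.smul_apply, smul_eq_mul]
  ring

lemma sum_nbrSet_quad (p : ℤ × ℤ) (hp1 : 0 ≤ p.1) (hp2 : p.1 ≤ p.2)
    (H : (ℝ×ℝ) →L[ℝ] (ℝ×ℝ) →L[ℝ] ℝ) :
    (1/2) * ∑ v ∈ nbrSet p, H v v
      = 2 * ((p.1:ℝ)^2 + (p.2:ℝ)^2) * cP p * (H (1,0) (1,0) + H (0,1) (0,1)) := by
  classical
  set A := H ((1:ℝ),(0:ℝ)) ((1:ℝ),(0:ℝ)) with hA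
  set B := H ((1:ℝ),(0:ℝ)) ((0:ℝ),(1:ℝ)) + H ((0:ℝ),(1:ℝ)) ((1:ℝ),(0:ℝ)) with hB
  set C := H ((0:ℝ),(1:ℝ)) ((0:ℝ),(1:ℝ)) with hC
  by_cases h1 : p.1 = 0
  · by_cases h2 : p.2 = 0
    · -- both zero
      have hs : nbrSet p = {((0:ℝ),(0:ℝ))} := by
        simp [nbrSet, h1, h2]
      rw [hs, Finset.sum_singleton, cP, if_pos ⟨h1, h2⟩, h1, h2]
      have : H ((0:ℝ),(0:ℝ)) ((0:ℝ),(0:ℝ)) = 0 := by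
        have : ((0:ℝ),(0:ℝ)) = (0 : ℝ×ℝ) := rfl
        rw [this]; simp
      rw [this]; push_cast; ring
    · -- p.1 = 0 < p.2
      have hb : ((p.2:ℝ)) ≠ 0 := by exact_mod_cast h2
      have hbne : ((p.2:ℝ)) ≠ -((p.2:ℝ)) := by intro h; apply hb; linarith
      have hs : nbrSet p = {((0:ℝ),(p.2:ℝ)), ((0:ℝ),-(p.2:ℝ)), ((p.2:ℝ),(0:ℝ)),
          (-(p.2:ℝ),(0:ℝ))} := by
        apply Finset.ext; intro v
        simp only [nbrSet, h1, Int.cast_zero, neg_zero, Finset.mem_insert, Finset.mem_singleton]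
        tauto
      rw [hs]
      rw [Finset.sum_insert (by simp [Prod.ext_iff, hb, Ne.symm hb, hbne, Ne.symm hbne]),
        Finset.sum_insert (by simp [Prod.ext_iff, hb, Ne.symm hb, hbne, Ne.symm hbne]),
        Finset.sum_insert (by simp [Prod.ext_iff, hb, Ne.symm hb, hbne, Ne.symm hbne]),
        Finset.sum_singleton]
      rw [cP, if_neg (by tauto), if_pos (Or.inl h1)]
      rw [show ((0:ℝ),(p.2:ℝ)) = (((0:ℝ),(p.2:ℝ)):ℝ×ℝ) from rfl]
      rw [quad_expand H 0 (p.2:ℝ), quad_expand H 0 (-(p.2:ℝ)), quad_expand H (p.2:ℝ) 0,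
        quad_expand H (-(p.2:ℝ)) 0, h1]
      push_cast; ring
  · have ha : (0:ℝ) < (p.1:ℝ) := by exact_mod_cast lt_of_le_of_ne hp1 (Ne.symm h1)
    by_cases h12 : p.1 = p.2
    · -- 0 < p.1 = p.2
      have hab : (p.1:ℝ) = (p.2:ℝ) := by exact_mod_cast h12
      have hane : ((p.1:ℝ)) ≠ 0 := ne_of_gt ha
      have h3 : (p.1:ℝ) ≠ -(p.1:ℝ) := by intro h; nlinarith
      have hs : nbrSet p = {((p.1:ℝ),(p.1:ℝ)), ((p.1:ℝ),-(p.1:ℝ)), (-(p.1:ℝ),(p.1:ℝ)),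
          (-(p.1:ℝ),-(p.1:ℝ))} := by
        apply Finset.ext; intro v
        simp only [nbrSet, ← hab, Finset.mem_insert, Finset.mem_singleton]
        tauto
      rw [hs]
      rw [Finset.sum_insert (by simp [Prod.ext_iff, hane, h3, Ne.symm h3]),
        Finset.sum_insert (by simp [Prod.ext_iff, hane, h3, Ne.symm h3]),
        Finset.sum_insert (by simp [Prod.ext_iff, hane, h3, Ne.symm h3]),
        Finset.sum_singleton]
      rw [cP, if_neg (by tauto), if_pos (Or.inr h12)]
      rw [quad_expand H (p.1:ℝ) (p.1:ℝ), quad_expand H (p.1:ℝ) (-(p.1:ℝ)),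
        quad_expand H (-(p.1:ℝ)) (p.1:ℝ), quad_expand H (-(p.1:ℝ)) (-(p.1:ℝ)), ← hab]
      ring
    · -- 0 < p.1 < p.2
      have hab : (p.1:ℝ) < (p.2:ℝ) := by exact_mod_cast lt_of_le_of_ne hp2 h12
      have hb : (0:ℝ) < (p.2:ℝ) := lt_trans ha hab
      have ne1 : (p.1:ℝ) ≠ (p.2:ℝ) := ne_of_lt hab
      have ne2 : (p.1:ℝ) ≠ -(p.2:ℝ) := by intro h; nlinarith
      have ne3 : (p.2:ℝ) ≠ -(p.1:ℝ) := by intro h; nlinarith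
      have ne4 : (p.1:ℝ) ≠ -(p.1:ℝ) := by intro h; nlinarith
      have ne5 : (p.2:ℝ) ≠ -(p.2:ℝ) := by intro h; nlinarith
      have ne6 : (-(p.1:ℝ)) ≠ (p.2:ℝ) := by intro h; nlinarith
      have ne7 : (-(p.2:ℝ)) ≠ (p.1:ℝ) := by intro h; nlinarith
      have ne8 : (-(p.1:ℝ)) ≠ -(p.2:ℝ) := by intro h; nlinarith
      rw [nbrSet]
      rw [Finset.sum_insert (by simp [Prod.ext_iff, ne1, ne2, ne3, ne4, ne5, ne6, ne7, ne8,
            Ne.symm ne1, Ne.symm ne2, Ne.symm ne3, Ne.symm ne4, Ne.symm ne5, Ne.symm ne6,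
            Ne.symm ne7, Ne.symm ne8]),
        Finset.sum_insert (by simp [Prod.ext_iff, ne1, ne2, ne3, ne4, ne5, ne6, ne7, ne8,
            Ne.symm ne1, Ne.symm ne2, Ne.symm ne3, Ne.symm ne4, Ne.symm ne5, Ne.symm ne6,
            Ne.symm ne7, Ne.symm ne8]),
        Finset.sum_insert (by simp [Prod.ext_iff, ne1, ne2, ne3, ne4, ne5, ne6, ne7, ne8,
            Ne.symm ne1, Ne.symm ne2, Ne.symm ne3, Ne.symm ne4, Ne.symm ne5, Ne.symm ne6,
            Ne.symm ne7, Ne.symm ne8]),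
        Finset.sum_insert (by simp [Prod.ext_iff, ne1, ne2, ne3, ne4, ne5, ne6, ne7, ne8,
            Ne.symm ne1, Ne.symm ne2, Ne.symm ne3, Ne.symm ne4, Ne.symm ne5, Ne.symm ne6,
            Ne.symm ne7, Ne.symm ne8]),
        Finset.sum_insert (by simp [Prod.ext_iff, ne1, ne2, ne3, ne4, ne5, ne6, ne7, ne8,
            Ne.symm ne1, Ne.symm ne2, Ne.symm ne3, Ne.symm ne4, Ne.symm ne5, Ne.symm ne6,
            Ne.symm ne7, Ne.symm ne8]),
        Finset.sum_insert (by simp [Prod.ext_iff, ne1, ne2, ne3, ne4, ne5, ne6, ne7, ne8,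
            Ne.symm ne1, Ne.symm ne2, Ne.symm ne3, Ne.symm ne4, Ne.symm ne5, Ne.symm ne6,
            Ne.symm ne7, Ne.symm ne8]),
        Finset.sum_insert (by simp [Prod.ext_iff, ne1, ne2, ne3, ne4, ne5, ne6, ne7, ne8,
            Ne.symm ne1, Ne.symm ne2, Ne.symm ne3, Ne.symm ne4, Ne.symm ne5, Ne.symm ne6,
            Ne.symm ne7, Ne.symm ne8]),
        Finset.sum_singleton]
      rw [cP, if_neg (by tauto), if_neg (by tauto)]
      rw [quad_expand H (p.1:ℝ) (p.2:ℝ), quad_expand H (p.1:ℝ) (-(p.2:ℝ)),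
        quad_expand H (-(p.1:ℝ)) (p.2:ℝ), quad_expand H (-(p.1:ℝ)) (-(p.2:ℝ)),
        quad_expand H (p.2:ℝ) (p.1:ℝ), quad_expand H (p.2:ℝ) (-(p.1:ℝ)),
        quad_expand H (-(p.2:ℝ)) (p.1:ℝ), quad_expand H (-(p.2:ℝ)) (-(p.1:ℝ))]
      ring

lemma pd_apply {Ω : Set (ℝ×ℝ)} (hΩ : IsOpen Ω) {f : ℝ×ℝ → ℝ} (hf : ContDiffOn ℝ 2 f Ω)
    {x : ℝ×ℝ} (hx : x ∈ Ω) (w u : ℝ×ℝ) :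
    fderiv ℝ (fun y => fderiv ℝ f y w) x u = fderiv ℝ (fderiv ℝ f) x u w := by
  have hf' : ContDiffOn ℝ 1 (fderiv ℝ f) Ω := hf.fderiv_of_isOpen (m := 1) hΩ (by norm_num)
  have hdiff : DifferentiableAt ℝ (fderiv ℝ f) x :=
    (hf'.differentiableOn (by norm_num)).differentiableAt (hΩ.mem_nhds hx)
  rw [fderiv_clm_apply hdiff (differentiableAt_const w)]
  simp

lemma pd_sum {Ω : Set (ℝ×ℝ)} (hΩ : IsOpen Ω) {f : ℝ×ℝ → ℝ} (hf : ContDiffOn ℝ 2 f Ω)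
    {x : ℝ×ℝ} (hx : x ∈ Ω) :
    pd1 (pd1 f) x + pd2 (pd2 f) x
      = fderiv ℝ (fderiv ℝ f) x (1,0) (1,0) + fderiv ℝ (fderiv ℝ f) x (0,1) (0,1) := by
  have h1 : pd1 (pd1 f) x = fderiv ℝ (fderiv ℝ f) x (1,0) (1,0) := by
    show fderiv ℝ (fun y => fderiv ℝ f y (1,0)) x (1,0) = _
    exact pd_apply hΩ hf hx (1,0) (1,0)
  have h2 : pd2 (pd2 f) x = fderiv ℝ (fderiv ℝ f) x (0,1) (0,1) := by
    show fderiv ℝ (fun y => fderiv ℝ f y (0,1)) x (0,1) = _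
    exact pd_apply hΩ hf hx (0,1) (0,1)
  rw [h1, h2]


lemma finsum_nbr (p : ℤ × ℤ) (hp1 : 0 ≤ p.1) (hp2 : p.1 ≤ p.2) (x : ℝ × ℝ) {l : ℝ}
    (hl : 0 < l) (g : ℝ × ℝ → ℝ) :
    ∑ᶠ (x' : ℝ × ℝ) (_ : isNbr p l x x'), g x' = ∑ v ∈ nbrSet p, g (x + l • v) := by
  classical
  show ∑ᶠ x' ∈ {x' : ℝ × ℝ | isNbr p l x x'}, g x' = _
  rw [nbr_set_eq p hp1 hp2 x hl, finsum_mem_coe_finset]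
  refine Finset.sum_image ?_
  intro v hv w hw h
  exact smul_right_injective (ℝ×ℝ) (ne_of_gt hl) (add_left_cancel h)

end Stmt15Aux

/-- sum of differences over `p`-neighbors recovers `2‖p‖²c_p Δf(x)`. -/
theorem stmt15 (p : ℤ × ℤ) (hp1 : 0 ≤ p.1) (hp2 : p.1 ≤ p.2)
    (Ω : Set (ℝ × ℝ)) (hΩ : IsOpen Ω) (f : ℝ × ℝ → ℝ) (hf : ContDiffOn ℝ 2 f Ω)
    (x : ℝ × ℝ) (hx : x ∈ Ω) :
    Filter.Tendsto
      (fun l : ℝ => (1 / l ^ 2) *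
        ∑ᶠ x' ∈ {x' : ℝ × ℝ | isNbr p l x x'}, (Iavg f x' l - Iavg f x l))
      (𝓝[>] (0 : ℝ))
      (𝓝 (2 * ((p.1 : ℝ) ^ 2 + (p.2 : ℝ) ^ 2) * cP p *
        (pd1 (pd1 f) x + pd2 (pd2 f) x))) := by
  have key := core_limit hΩ hf hx (nbrSet p) (sum_nbrSet_zero p)
  have heq : (1/2 : ℝ) * ∑ v ∈ nbrSet p, (fderiv ℝ (fderiv ℝ f) x v v)
      = 2 * ((p.1:ℝ)^2 + (p.2:ℝ)^2) * cP p * (pd1 (pd1 f) x + pd2 (pd2 f) x) := by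
    rw [pd_sum hΩ hf hx]
    exact sum_nbrSet_quad p hp1 hp2 (fderiv ℝ (fderiv ℝ f) x)
  rw [heq] at key
  refine Filter.Tendsto.congr' ?_ key
  filter_upwards [self_mem_nhdsWithin] with l hl
  rw [Set.mem_Ioi] at hl
  rw [finsum_nbr p hp1 hp2 x hl]
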